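/- For every finite H ⊆ [p]^m and every i ∈ [m], and every subset S of coordinates, the size of the restriction of the shifted class S_i(H) to S is at most the size of the restriction of H to S: |S_i(H)|_S| ≤ |H|_S|. -/

import Mathlib

open Finset

/-- Generalized shift over any finite index type. -/
def shiftG {ι : Type*} [DecidableEq ι] [Fintype ι] {p : ℕ} (i : ι)
    (H : Finset (ι → Fin p)) : Finset (ι → Fin p) :=
  Finset.univ.filter fun g =>
    (g i : ℕ) < (H.filter fun h => ∀ j, j ≠ i → h j = g j).card

lemma card_filter_eq {α : Type*} {p : α → Prop} (h1 h2 : DecidablePred p)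
    (s : Finset α) :
    (@Finset.filter α p h1 s).card = (@Finset.filter α p h2 s).card := by
  congr!

lemma mem_shiftG {ι : Type*} [DecidableEq ι] [Fintype ι] {p : ℕ} {i : ι}
    {H : Finset (ι → Fin p)} {g : ι → Fin p} :
    g ∈ shiftG i H ↔
      (g i : ℕ) < (H.filter fun h => ∀ j, j ≠ i → h j = g j).card := by
  simp [shiftG]

lemma shiftG_card_le {ι : Type*} [DecidableEq ι] [Fintype ι] {p : ℕ} (i : ι)
    (H : Finset (ι → Fin p)) : (shiftG i H).card ≤ H.card := by
  classical
  set k : (ι → Fin p) → ({x : ι // x ≠ i} → Fin p) := fun g j => g j.1 with hk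
  set T := (shiftG i H).image k with hT
  have h1 : (shiftG i H).card
      = ∑ w ∈ T, ((shiftG i H).filter fun g => k g = w).card :=
    Finset.card_eq_sum_card_fiberwise fun x hx => Finset.mem_image_of_mem _ hx
  have hkey : ∀ (g : ι → Fin p), (H.filter fun h => ∀ j, j ≠ i → h j = g j)
      = H.filter fun h => k h = k g := by
    intro g
    apply Finset.filter_congr
    intro h _
    constructor
    · intro hh
      funext j
      exact hh j.1 j.2
    · intro hh j hj
      exact congrFun hh ⟨j, hj⟩
  have h2 : ∀ w ∈ T, ((shiftG i H).filter fun g => k g = w).card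
      ≤ (H.filter fun h => k h = w).card := by
    intro w _
    have := Finset.card_le_card_of_injOn (f := fun g : ι → Fin p => (g i : ℕ))
      (s := (shiftG i H).filter fun g => k g = w)
      (t := Finset.range (H.filter fun h => k h = w).card)
      ?_ ?_
    · simpa using this
    · intro g hg
      rw [Finset.mem_coe, Finset.mem_filter] at hg
      obtain ⟨hg1, hg2⟩ := hg
      rw [mem_shiftG] at hg1
      rw [Finset.mem_coe, Finset.mem_range]
      rw [hkey g, hg2] at hg1
      exact hg1
    · intro g hg g' hg' hgg
      rw [Finset.mem_coe, Finset.mem_filter] at hg hg'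
      funext j
      by_cases hj : j = i
      · subst hj; exact Fin.val_injective hgg
      · exact congrFun (hg.2.trans hg'.2.symm) ⟨j, hj⟩
  have h3 : ∑ w ∈ T, (H.filter fun h => k h = w).card ≤ H.card := by
    have h4 : (H.filter fun h => k h ∈ T).card
        = ∑ w ∈ T, ((H.filter fun h => k h ∈ T).filter fun h => k h = w).card :=
      Finset.card_eq_sum_card_fiberwise fun x hx => (Finset.mem_filter.mp hx).2
    have h5 : ∀ w ∈ T, ((H.filter fun h => k h ∈ T).filter fun h => k h = w)
        = H.filter fun h => k h = w := by
      intro w hw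
      ext h
      simp only [Finset.mem_filter]
      constructor
      · rintro ⟨⟨h1, _⟩, h3⟩; exact ⟨h1, h3⟩
      · rintro ⟨h1, h3⟩; exact ⟨⟨h1, h3 ▸ hw⟩, h3⟩
    calc ∑ w ∈ T, (H.filter fun h => k h = w).card
        = (H.filter fun h => k h ∈ T).card := by
          rw [h4]; exact Finset.sum_congr rfl fun w hw => by rw [h5 w hw]
      _ ≤ H.card := Finset.card_le_card (Finset.filter_subset _ _)
  calc (shiftG i H).card = _ := h1
    _ ≤ ∑ w ∈ T, (H.filter fun h => k h = w).card := Finset.sum_le_sum h2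
    _ ≤ H.card := h3

/-- The shifting operator in direction `i`. -/
def shift {m p : ℕ} (i : Fin m) (H : Finset (Fin m → Fin p)) :
    Finset (Fin m → Fin p) :=
  Finset.univ.filter fun g =>
    (g i : ℕ) < (H.filter fun h => ∀ j, j ≠ i → h j = g j).card

theorem stmt9 {m p : ℕ} (H : Finset (Fin m → Fin p)) (i : Fin m)
    (S : Finset (Fin m)) :
    ((shift i H).image fun h => fun j : {x // x ∈ S} => h j.1).card
      ≤ (H.image fun h => fun j : {x // x ∈ S} => h j.1).card := by
  classical
  have hshift : shift i H = shiftG i H := by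
    ext g
    rw [mem_shiftG]
    simp only [shift, Finset.mem_filter, Finset.mem_univ, true_and]
    constructor <;> intro hx <;> exact hx.trans_le (card_filter_eq _ _ _).le
  set r : (Fin m → Fin p) → ({x // x ∈ S} → Fin p) :=
    fun h => fun j : {x // x ∈ S} => h j.1 with hr
  rw [hshift]
  by_cases hiS : i ∈ S
  · -- i ∈ S : image of shift ⊆ shiftG of image
    have hsub : (shiftG i H).image r ⊆ shiftG (⟨i, hiS⟩ : {x // x ∈ S}) (H.image r) := by
      intro f hf
      obtain ⟨g, hg, rfl⟩ := Finset.mem_image.mp hf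
      rw [mem_shiftG] at hg
      rw [mem_shiftG]
      have hle : (H.filter fun h => ∀ j, j ≠ i → h j = g j).card
          ≤ ((H.image r).filter fun t => ∀ j, j ≠ (⟨i, hiS⟩ : {x // x ∈ S}) → t j = r g j).card := by
        apply Finset.card_le_card_of_injOn r
        · intro h hh
          rw [Finset.mem_coe, Finset.mem_filter] at hh ⊢
          refine ⟨Finset.mem_image_of_mem _ hh.1, ?_⟩
          intro j hj
          have : j.1 ≠ i := fun hc => hj (Subtype.ext hc)
          exact hh.2 j.1 this
        · intro h hh h' hh' hrr
          rw [Finset.mem_coe, Finset.mem_filter] at hh hh'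
          funext j
          by_cases hj : j = i
          · rw [hj]
            exact congrFun hrr ⟨i, hiS⟩
          · exact (hh.2 j hj).trans (hh'.2 j hj).symm
      exact lt_of_lt_of_le (hg.trans_le (card_filter_eq _ _ _).le) hle
    calc ((shiftG i H).image r).card
        ≤ (shiftG (⟨i, hiS⟩ : {x // x ∈ S}) (H.image r)).card := Finset.card_le_card hsub
      _ ≤ (H.image r).card := shiftG_card_le _ _
  · -- i ∉ S : image of shift ⊆ image of H
    apply Finset.card_le_card
    intro f hf
    obtain ⟨g, hg, rfl⟩ := Finset.mem_image.mp hf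
    rw [mem_shiftG] at hg
    have hpos : 0 < (H.filter fun h => ∀ j, j ≠ i → h j = g j).card :=
      lt_of_le_of_lt (Nat.zero_le _) (hg.trans_le (card_filter_eq _ _ _).le)
    obtain ⟨h, hh⟩ := Finset.card_pos.mp hpos
    rw [Finset.mem_filter] at hh
    have : r h = r g := by
      funext j
      exact hh.2 j.1 (fun hc => hiS (hc ▸ j.2))
    rw [← this]
    exact Finset.mem_image_of_mem _ hh.1
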